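/- Gauss's theorem on the boundary behavior of the hypergeometric function: if Re(a+b-c) > 0 and a, b are not nonpositive integers, then (1-x)^{a+b-c} F(a,b;c;x) tends to Γ(c)Γ(a+b-c)/(Γ(a)Γ(b)) as x → 1 from the left. -/

import Mathlib

noncomputable def poch (a : ℂ) (m : ℕ) : ℂ := (ascPochhammer ℂ m).eval a

noncomputable def hyp (a b c x : ℂ) : ℂ :=
  ∑' m : ℕ, poch a m * poch b m / (m.factorial * poch c m) * x ^ m

open Filter Finset Topology MeasureTheory

lemma poch_succ (z : ℂ) (n : ℕ) : poch z (n + 1) = poch z n * (z + n) := by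
  simp [poch, ascPochhammer_succ_right, Polynomial.eval_mul]

lemma poch_eq_prod (z : ℂ) (n : ℕ) : poch z n = ∏ i ∈ Finset.range n, (z + i) := by
  induction n with
  | zero => simp [poch]
  | succ n ih => rw [poch_succ, ih, Finset.prod_range_succ]

lemma poch_ne_zero {z : ℂ} (hz : ∀ m : ℕ, z ≠ -(m : ℂ)) (n : ℕ) : poch z n ≠ 0 := by
  simp only [poch, ne_eq, ascPochhammer_eval_eq_zero_iff]
  rintro ⟨k, -, hk⟩
  exact hz k (neg_eq_iff_eq_neg.mp hk.symm)

noncomputable def pochR (σ : ℝ) (n : ℕ) : ℝ := ∏ i ∈ Finset.range n, (σ + i)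

lemma pochR_pos {σ : ℝ} (hσ : 0 < σ) (n : ℕ) : 0 < pochR σ n :=
  Finset.prod_pos fun i _ => by positivity

lemma pochR_succ (σ : ℝ) (n : ℕ) : pochR σ (n + 1) = pochR σ n * (σ + n) :=
  Finset.prod_range_succ _ _

lemma ofReal_pochR (σ : ℝ) (n : ℕ) : ((pochR σ n : ℝ) : ℂ) = poch (σ : ℂ) n := by
  rw [poch_eq_prod, pochR]
  push_cast
  rfl

lemma gs_eq (z : ℂ) (n : ℕ) :
    Complex.GammaSeq z n = (n : ℂ) ^ z * n.factorial / poch z (n + 1) := by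
  rw [Complex.GammaSeq, poch_eq_prod]


lemma gsR_eq (σ : ℝ) (n : ℕ) :
    Real.GammaSeq σ n = (n : ℝ) ^ σ * n.factorial / pochR σ (n + 1) := by
  rw [Real.GammaSeq, pochR]


lemma Gamma_poch {z : ℂ} (hz : 0 < z.re) (n : ℕ) :
    Complex.Gamma (z + n) = poch z n * Complex.Gamma z := by
  induction n with
  | zero => simp [poch]
  | succ n ih =>
      have hne : z + n ≠ 0 := by
        intro h
        have := congrArg Complex.re h
        simp [Complex.add_re] at this
        nlinarith [this, hz]
      calc Complex.Gamma (z + (n + 1 : ℕ)) = Complex.Gamma ((z + n) + 1) := by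
            push_cast; ring_nf
        _ = (z + n) * Complex.Gamma (z + n) := Complex.Gamma_add_one _ hne
        _ = poch z (n + 1) * Complex.Gamma z := by rw [ih, poch_succ]; ring

lemma GammaR_poch {σ : ℝ} (hσ : 0 < σ) (n : ℕ) :
    Real.Gamma (σ + n) = pochR σ n * Real.Gamma σ := by
  induction n with
  | zero => simp [pochR]
  | succ n ih =>
      have hne : σ + n ≠ 0 := by positivity
      calc Real.Gamma (σ + (n + 1 : ℕ)) = Real.Gamma ((σ + n) + 1) := by push_cast; ring_nf
        _ = (σ + n) * Real.Gamma (σ + n) := Real.Gamma_add_one hne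
        _ = pochR σ (n + 1) * Real.Gamma σ := by rw [ih, pochR_succ]; ring

lemma tendsto_shift_div (σ : ℝ) : Tendsto (fun n : ℕ => (σ + n) / (n + 1)) atTop (𝓝 1) := by
  have h0 : Tendsto (fun n : ℕ => (σ - 1) / ((n : ℝ) + 1)) atTop (𝓝 0) :=
    tendsto_const_nhds.div_atTop (tendsto_atTop_add_const_right _ 1 tendsto_natCast_atTop_atTop)
  have h1 := h0.add_const 1
  rw [zero_add] at h1
  refine h1.congr fun n => ?_
  have hn : ((n : ℝ) + 1) ≠ 0 := by positivity
  field_simp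
  ring

lemma summable_pochR {σ : ℝ} (hσ : 0 < σ) {x : ℝ} (hx0 : 0 < x) (hx1 : x < 1) :
    Summable (fun n : ℕ => pochR σ n / n.factorial * x ^ n) := by
  have hne : ∀ n : ℕ, pochR σ n / n.factorial * x ^ n ≠ 0 := fun n => by
    have := pochR_pos hσ n
    have : (0:ℝ) < pochR σ n / n.factorial * x ^ n := by positivity
    exact this.ne'
  refine summable_of_ratio_test_tendsto_lt_one hx1 (Eventually.of_forall hne) ?_
  have key : ∀ n : ℕ, ‖pochR σ (n+1) / (n+1).factorial * x ^ (n+1)‖ /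
      ‖pochR σ n / n.factorial * x ^ n‖ = (σ + n) / (n + 1) * x := by
    intro n
    have h1 : (0:ℝ) < pochR σ n / n.factorial * x ^ n := by
      have := pochR_pos hσ n; positivity
    have h2 : (0:ℝ) < pochR σ (n+1) / (n+1).factorial * x ^ (n+1) := by
      have := pochR_pos hσ (n+1); positivity
    have hσn : (0:ℝ) < σ + n := by positivity
    have hf : (0:ℝ) < (n.factorial : ℝ) := by positivity
    have hstep : pochR σ (n+1) / (n+1).factorial * x ^ (n+1)
        = (pochR σ n / n.factorial * x ^ n) * ((σ + n) / (n + 1) * x) := by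
      rw [pochR_succ, Nat.factorial_succ]
      have : ((n:ℝ) + 1) ≠ 0 := by positivity
      push_cast
      field_simp
      ring
    rw [hstep, norm_mul, mul_comm (‖pochR σ n / ↑n.factorial * x ^ n‖),
      mul_div_cancel_right₀ _ (norm_ne_zero_iff.mpr h1.ne'),
      Real.norm_of_nonneg (by positivity)]
  simp_rw [key]
  have := (tendsto_shift_div σ).mul_const x
  rwa [one_mul] at this

lemma hasSum_binomial {z : ℂ} (hz : 0 < z.re) {x : ℝ} (hx0 : 0 < x) (hx1 : x < 1) :
    HasSum (fun n : ℕ => poch z n / n.factorial * (x : ℂ) ^ n)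
      (((1 : ℂ) - (x : ℂ)) ^ (-z)) := by
  have hσ : 0 < z.re := hz
  set σ := z.re with hσdef
  set F : ℕ → ℝ → ℂ := fun n t =>
    ((x : ℂ) ^ n / n.factorial) • (↑(Real.exp (-t)) * (t : ℂ) ^ (z + n - 1)) with hF
  have hzn : ∀ n : ℕ, 0 < (z + (n : ℂ)).re := fun n => by
    rw [Complex.add_re, Complex.natCast_re]
    positivity
  have hFint : ∀ n, Integrable (F n) (volume.restrict (Set.Ioi 0)) := by
    intro n
    have h := (Complex.GammaIntegral_convergent (hzn n)).smul ((x : ℂ) ^ n / n.factorial)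
    exact h
  have hnorm : ∀ n : ℕ, (∫ t in Set.Ioi (0:ℝ), ‖F n t‖)
      = pochR σ n / n.factorial * x ^ n * Real.Gamma σ := by
    intro n
    have heq : ∀ t ∈ Set.Ioi (0:ℝ), ‖F n t‖
        = (x ^ n / n.factorial) * (Real.exp (-t) * t ^ (σ + n - 1)) := by
      intro t ht
      rw [Set.mem_Ioi] at ht
      have h1 : ‖(t : ℂ) ^ (z + n - 1)‖ = t ^ (σ + n - 1) := by
        rw [Complex.norm_cpow_eq_rpow_re_of_pos ht]
        norm_num [Complex.add_re, Complex.sub_re]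
        rfl
      rw [hF]
      simp only [norm_smul, norm_mul, norm_div, norm_pow,
        Complex.norm_real, Complex.norm_natCast, Real.norm_eq_abs]
      rw [h1, abs_of_pos hx0, abs_of_pos (Real.exp_pos _)]
    rw [setIntegral_congr_fun measurableSet_Ioi heq, MeasureTheory.integral_const_mul,
      ← Real.Gamma_eq_integral (by positivity : (0:ℝ) < σ + n), GammaR_poch hσ n]
    ring
  have hFsum : Summable fun n => ∫ t in Set.Ioi (0:ℝ), ‖F n t‖ := by
    simp_rw [hnorm]
    exact (summable_pochR hσ hx0 hx1).mul_right _
  have key := hasSum_integral_of_summable_integral_norm hFint hFsum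
  have hterm : ∀ n : ℕ, (∫ t in Set.Ioi (0:ℝ), F n t)
      = poch z n / n.factorial * (x : ℂ) ^ n * Complex.Gamma z := by
    intro n
    rw [hF]
    rw [integral_smul]
    have hg : (∫ t in Set.Ioi (0:ℝ), (↑(Real.exp (-t)) * (t : ℂ) ^ (z + n - 1)))
        = Complex.Gamma (z + n) := by
      rw [Complex.Gamma_eq_integral (hzn n)]
      rfl
    rw [hg, Gamma_poch hz n, smul_eq_mul]
    ring
  have htot : (∫ t in Set.Ioi (0:ℝ), ∑' n, F n t)
      = (1 / ((1 - x : ℝ) : ℂ)) ^ z * Complex.Gamma z := by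
    rw [← Complex.integral_cpow_mul_exp_neg_mul_Ioi hz (by linarith : (0:ℝ) < 1 - x)]
    refine setIntegral_congr_fun measurableSet_Ioi (fun t ht => ?_)
    rw [Set.mem_Ioi] at ht
    have ht0 : (t : ℂ) ≠ 0 := by
      simp only [ne_eq, Complex.ofReal_eq_zero]
      exact ht.ne'
    have hFnt : ∀ n : ℕ, F n t
        = ((x : ℂ) * t) ^ n / n.factorial * (↑(Real.exp (-t)) * (t : ℂ) ^ (z - 1)) := by
      intro n
      have hsplit : (t : ℂ) ^ (z + n - 1) = (t : ℂ) ^ (z - 1) * (t : ℂ) ^ (n : ℕ) := by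
        rw [← Complex.cpow_natCast, ← Complex.cpow_add _ _ ht0]
        ring_nf
      simp only [hF, hsplit, smul_eq_mul, mul_pow]
      ring
    have he : HasSum (fun n : ℕ => ((x : ℂ) * t) ^ n / n.factorial)
        (Complex.exp ((x : ℂ) * t)) := by
      rw [Complex.exp_eq_exp_ℂ]
      exact NormedSpace.expSeries_div_hasSum_exp _
    have hs : HasSum (fun n => F n t)
        (Complex.exp ((x : ℂ) * t) * (↑(Real.exp (-t)) * (t : ℂ) ^ (z - 1))) := by
      simp_rw [hFnt]
      exact he.mul_right _
    rw [hs.tsum_eq, Complex.ofReal_exp, ← mul_assoc, ← Complex.exp_add, mul_comm]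
    congr 1
    push_cast
    ring_nf
  rw [funext hterm, htot] at key
  have hΓ : Complex.Gamma z ≠ 0 := Complex.Gamma_ne_zero_of_re_pos hz
  have key2 := key.div_const (Complex.Gamma z)
  simp only [mul_div_cancel_right₀ _ hΓ] at key2
  have harg : (((1 - x : ℝ) : ℂ)).arg ≠ Real.pi := by
    rw [Complex.arg_ofReal_of_nonneg (by linarith)]
    exact Real.pi_ne_zero.symm
  have hval : (1 / ((1 - x : ℝ) : ℂ)) ^ z = ((1 : ℂ) - (x : ℂ)) ^ (-z) := by
    rw [one_div, Complex.inv_cpow _ _ harg, ← Complex.cpow_neg]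
    push_cast
    ring_nf
  rw [hval] at key2
  exact key2

lemma hasSum_binomial_real {σ : ℝ} (hσ : 0 < σ) {x : ℝ} (hx0 : 0 < x) (hx1 : x < 1) :
    HasSum (fun n : ℕ => pochR σ n / n.factorial * x ^ n) ((1 - x) ^ (-σ)) := by
  have h := hasSum_binomial (z := (σ : ℂ)) (by simpa using hσ) hx0 hx1
  have hterm : (fun n : ℕ => poch (σ : ℂ) n / n.factorial * (x : ℂ) ^ n)
      = fun n : ℕ => ((pochR σ n / n.factorial * x ^ n : ℝ) : ℂ) := by
    funext n
    rw [← ofReal_pochR]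
    push_cast
    ring
  rw [hterm] at h
  have hval : ((1 : ℂ) - (x : ℂ)) ^ (-(σ : ℂ)) = (((1 - x) ^ (-σ) : ℝ) : ℂ) := by
    rw [Complex.ofReal_cpow (by linarith : (0:ℝ) ≤ 1 - x)]
    push_cast
    ring_nf
  rw [hval] at h
  exact_mod_cast h

set_option maxHeartbeats 1000000 in
lemma abel_pos {σ : ℝ} (hσ : 0 < σ) {e : ℕ → ℝ} (he : ∀ n, 0 ≤ e n)
    (hlim : Tendsto (fun n => e n / (pochR σ n / n.factorial)) atTop (𝓝 0)) :
    Tendsto (fun x : ℝ => (1 - x) ^ σ * ∑' n, e n * x ^ n)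
      (nhdsWithin 1 (Set.Iio 1)) (𝓝 0) := by
  set d : ℕ → ℝ := fun n => pochR σ n / n.factorial with hd
  have hdpos : ∀ n, 0 < d n := fun n => by
    have := pochR_pos hσ n
    positivity
  obtain ⟨M, hM⟩ := hlim.bddAbove_range
  have hMbd : ∀ n, e n ≤ M * d n := fun n => by
    have h1 : e n / d n ≤ M := hM (Set.mem_range_self n)
    calc e n = e n / d n * d n := (div_mul_cancel₀ _ (hdpos n).ne').symm
    _ ≤ M * d n := mul_le_mul_of_nonneg_right h1 (hdpos n).le
  have hsum : ∀ {x : ℝ}, 0 < x → x < 1 → Summable (fun n => e n * x ^ n) := by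
    intro x hx0 hx1
    refine Summable.of_nonneg_of_le (fun n => mul_nonneg (he n) (by positivity))
      (fun n => ?_) (((summable_pochR hσ hx0 hx1)).mul_left M)
    have hxn : (0:ℝ) ≤ x ^ n := by positivity
    calc e n * x ^ n ≤ M * d n * x ^ n := mul_le_mul_of_nonneg_right (hMbd n) hxn
    _ = M * (d n * x ^ n) := by ring
  rw [Metric.tendsto_nhds]
  intro ε hε
  obtain ⟨N, hN⟩ : ∃ N : ℕ, ∀ n ≥ N, e n ≤ ε / 4 * d n := by
    have := (hlim.eventually (gt_mem_nhds (show (0:ℝ) < ε / 4 by positivity)))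
    rw [eventually_atTop] at this
    obtain ⟨N, hN⟩ := this
    exact ⟨N, fun n hn => by
      have h1 := (hN n hn).le
      calc e n = e n / d n * d n := (div_mul_cancel₀ _ (hdpos n).ne').symm
      _ ≤ ε / 4 * d n := mul_le_mul_of_nonneg_right h1 (hdpos n).le⟩
  set C : ℝ := ∑ n ∈ Finset.range N, e n with hC
  have hC0 : 0 ≤ C := Finset.sum_nonneg fun n _ => he n
  have hhead : Tendsto (fun x : ℝ => (1 - x) ^ σ * C) (nhdsWithin 1 (Set.Iio 1)) (𝓝 0) := by
    have h1 : Tendsto (fun x : ℝ => 1 - x) (𝓝 (1:ℝ)) (𝓝 0) := by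
      have h := ((tendsto_id : Tendsto id (𝓝 (1:ℝ)) (𝓝 1)).const_sub 1)
      simpa using h
    have h2 : ContinuousAt (fun y : ℝ => y ^ σ) 0 :=
      Real.continuousAt_rpow_const 0 σ (Or.inr hσ.le)
    have h3 : Tendsto (fun x : ℝ => (1 - x) ^ σ) (𝓝 (1:ℝ)) (𝓝 0) := by
      have := h2.tendsto.comp h1
      rwa [Real.zero_rpow hσ.ne'] at this
    have := (h3.mul_const C)
    rw [zero_mul] at this
    exact this.mono_left nhdsWithin_le_nhds
  have hev1 : ∀ᶠ x in nhdsWithin (1:ℝ) (Set.Iio 1), (1 - x) ^ σ * C < ε / 2 :=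
    hhead.eventually (gt_mem_nhds (by positivity))
  have hev2 : Set.Ioo (0:ℝ) 1 ∈ nhdsWithin (1:ℝ) (Set.Iio 1) :=
    Ioo_mem_nhdsLT_of_mem (by norm_num : (1:ℝ) ∈ Set.Ioc 0 1)
  filter_upwards [hev1, hev2] with x hx1 hx2
  obtain ⟨hx0, hxlt⟩ := hx2
  have h1x : (0:ℝ) < 1 - x := by linarith
  have hSsum := hsum hx0 hxlt
  have hdsum := summable_pochR hσ hx0 hxlt
  have hS0 : 0 ≤ ∑' n, e n * x ^ n :=
    tsum_nonneg fun n => mul_nonneg (he n) (by positivity)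
  have hpow : (0:ℝ) < (1 - x) ^ σ := Real.rpow_pos_of_pos h1x σ
  -- bound the tsum
  have hsplit := (hSsum.sum_add_tsum_nat_add N).symm
  have hheadle : ∑ n ∈ Finset.range N, e n * x ^ n ≤ C := by
    refine Finset.sum_le_sum fun n _ => ?_
    have : x ^ n ≤ 1 := pow_le_one₀ hx0.le hxlt.le
    calc e n * x ^ n ≤ e n * 1 := mul_le_mul_of_nonneg_left this (he n)
    _ = e n := mul_one _
  have htail : (∑' n : ℕ, e (n + N) * x ^ (n + N))
      ≤ ε / 4 * ∑' n : ℕ, d n * x ^ n := by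
    have hts : Summable (fun n : ℕ => e (n + N) * x ^ (n + N)) :=
      (summable_nat_add_iff N).mpr hSsum
    have hds : Summable (fun n : ℕ => d (n + N) * x ^ (n + N)) :=
      (summable_nat_add_iff N).mpr hdsum
    calc (∑' n : ℕ, e (n + N) * x ^ (n + N))
        ≤ ∑' n : ℕ, ε / 4 * (d (n + N) * x ^ (n + N)) := by
          refine Summable.tsum_le_tsum (fun n => ?_) hts (hds.mul_left _)
          have hxn : (0:ℝ) ≤ x ^ (n + N) := by positivity
          calc e (n + N) * x ^ (n + N)
              ≤ ε / 4 * d (n + N) * x ^ (n + N) :=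
                mul_le_mul_of_nonneg_right (hN _ (Nat.le_add_left _ _)) hxn
          _ = ε / 4 * (d (n + N) * x ^ (n + N)) := by ring
    _ = ε / 4 * ∑' n : ℕ, d (n + N) * x ^ (n + N) := tsum_mul_left
    _ ≤ ε / 4 * ∑' n : ℕ, d n * x ^ n := by
        refine mul_le_mul_of_nonneg_left ?_ (by positivity)
        have := (hdsum.sum_add_tsum_nat_add N).symm
        have hnn : 0 ≤ ∑ n ∈ Finset.range N, d n * x ^ n :=
          Finset.sum_nonneg fun n _ => mul_nonneg (hdpos n).le (by positivity)
        linarith [this]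
  have hdval : (∑' n : ℕ, d n * x ^ n) = (1 - x) ^ (-σ) :=
    (hasSum_binomial_real hσ hx0 hxlt).tsum_eq
  have hbound : (1 - x) ^ σ * ∑' n, e n * x ^ n ≤ (1 - x) ^ σ * C + ε / 4 := by
    have hSle : (∑' n, e n * x ^ n) ≤ C + ε / 4 * (1 - x) ^ (-σ) := by
      rw [hsplit]
      have := htail
      rw [hdval] at this
      linarith [hheadle]
    calc (1 - x) ^ σ * ∑' n, e n * x ^ n
        ≤ (1 - x) ^ σ * (C + ε / 4 * (1 - x) ^ (-σ)) :=
          mul_le_mul_of_nonneg_left hSle hpow.le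
    _ = (1 - x) ^ σ * C + ε / 4 * ((1 - x) ^ σ * (1 - x) ^ (-σ)) := by ring
    _ = (1 - x) ^ σ * C + ε / 4 := by
        rw [Real.rpow_neg h1x.le, mul_inv_cancel₀ hpow.ne']
        ring
  rw [Real.dist_eq, sub_zero, abs_of_nonneg (mul_nonneg hpow.le hS0)]
  calc (1 - x) ^ σ * ∑' n, e n * x ^ n ≤ (1 - x) ^ σ * C + ε / 4 := hbound
  _ < ε / 2 + ε / 4 := by linarith
  _ < ε := by linarith

section ratios
variable {a b c : ℂ}

lemma ratio_tendsto (ha : ∀ m : ℕ, a ≠ -(m : ℂ)) (hb : ∀ m : ℕ, b ≠ -(m : ℂ))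
    (hc : ∀ m : ℕ, c ≠ -(m : ℂ)) (hs : ∀ m : ℕ, a + b - c ≠ -(m : ℂ)) :
    Tendsto (fun n : ℕ => (poch a n * poch b n / (n.factorial * poch c n)) /
        (poch (a + b - c) n / n.factorial)) atTop
      (𝓝 (Complex.Gamma c * Complex.Gamma (a + b - c) /
        (Complex.Gamma a * Complex.Gamma b))) := by
  set s : ℂ := a + b - c with hsdef
  have hΓab : Complex.Gamma a * Complex.Gamma b ≠ 0 :=
    mul_ne_zero (Complex.Gamma_ne_zero ha) (Complex.Gamma_ne_zero hb)
  have hlim : Tendsto (fun n : ℕ => Complex.GammaSeq c n * Complex.GammaSeq s n /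
      (Complex.GammaSeq a n * Complex.GammaSeq b n)) atTop
      (𝓝 (Complex.Gamma c * Complex.Gamma s / (Complex.Gamma a * Complex.Gamma b))) :=
    ((Complex.GammaSeq_tendsto_Gamma c).mul (Complex.GammaSeq_tendsto_Gamma s)).div
      ((Complex.GammaSeq_tendsto_Gamma a).mul (Complex.GammaSeq_tendsto_Gamma b)) hΓab
  rw [← tendsto_add_atTop_iff_nat 2]
  refine Tendsto.congr' ?_ ((tendsto_add_atTop_iff_nat 1).mpr hlim)
  refine Eventually.of_forall fun n => ?_
  have hm0 : ((n + 1 : ℕ) : ℂ) ≠ 0 := Nat.cast_ne_zero.mpr (Nat.succ_ne_zero n)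
  have hpa := poch_ne_zero ha (n+2)
  have hpb := poch_ne_zero hb (n+2)
  have hpc := poch_ne_zero hc (n+2)
  have hps := poch_ne_zero hs (n+2)
  have hfac : (((n+2).factorial : ℂ)) ≠ 0 :=
    Nat.cast_ne_zero.mpr (n+2).factorial_ne_zero
  have hfac1 : (((n+1).factorial : ℂ)) ≠ 0 :=
    Nat.cast_ne_zero.mpr (n+1).factorial_ne_zero
  have hm0' : ((n : ℂ) + 1) ≠ 0 := by push_cast at hm0; exact hm0
  have h0 : ∀ z : ℂ, ((n : ℂ) + 1) ^ z ≠ 0 := fun z => by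
    simp only [ne_eq, Complex.cpow_eq_zero_iff, not_and_or, not_not]
    exact Or.inl hm0'
  have hpa2 : poch a (n+1+1) ≠ 0 := hpa
  have hpb2 : poch b (n+1+1) ≠ 0 := hpb
  have hpc2 : poch c (n+1+1) ≠ 0 := hpc
  have hps2 : poch s (n+1+1) ≠ 0 := hps
  have h0a := h0 a
  have h0b := h0 b
  have h0c := h0 c
  have h0s := h0 s
  have hpow : ((n : ℂ) + 1) ^ a * ((n : ℂ) + 1) ^ b
      = ((n : ℂ) + 1) ^ c * ((n : ℂ) + 1) ^ s := by
    rw [← Complex.cpow_add _ _ hm0', ← Complex.cpow_add _ _ hm0']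
    congr 1
    rw [hsdef]
    ring
  show Complex.GammaSeq c (n+1) * Complex.GammaSeq s (n+1) /
        (Complex.GammaSeq a (n+1) * Complex.GammaSeq b (n+1))
      = poch a (n+2) * poch b (n+2) / ((n+2).factorial * poch c (n+2)) /
        (poch s (n+2) / (n+2).factorial)
  rw [gs_eq a, gs_eq b, gs_eq c, gs_eq s]
  simp only [show n + 1 + 1 = n + 2 from rfl]
  field_simp
  push_cast
  linear_combination (-1 : ℂ) * hpow
end ratios

lemma norm_ratio_tendsto {s : ℂ} (hs : 0 < s.re) :
    Tendsto (fun n : ℕ => ‖poch s n / n.factorial‖ / (pochR s.re n / n.factorial)) atTop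
      (𝓝 (Real.Gamma s.re / ‖Complex.Gamma s‖)) := by
  have hsne : ∀ m : ℕ, s ≠ -(m : ℂ) := fun m h => by
    rw [h] at hs
    simp only [Complex.neg_re, Complex.natCast_re] at hs
    have : (0:ℝ) ≤ (m:ℝ) := Nat.cast_nonneg m
    linarith
  have hΓ : ‖Complex.Gamma s‖ ≠ 0 :=
    norm_ne_zero_iff.mpr (Complex.Gamma_ne_zero hsne)
  have hlim : Tendsto (fun n : ℕ => Real.GammaSeq s.re n / ‖Complex.GammaSeq s n‖) atTop
      (𝓝 (Real.Gamma s.re / ‖Complex.Gamma s‖)) :=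
    (Real.GammaSeq_tendsto_Gamma s.re).div (Complex.GammaSeq_tendsto_Gamma s).norm hΓ
  rw [← tendsto_add_atTop_iff_nat 2]
  refine Tendsto.congr' ?_ ((tendsto_add_atTop_iff_nat 1).mpr hlim)
  refine Eventually.of_forall fun n => ?_
  have hps := poch_ne_zero hsne (n+2)
  have hnp : ‖poch s (n+2)‖ ≠ 0 := norm_ne_zero_iff.mpr hps
  have hppos := pochR_pos hs (n+2)
  have hfac2 : (0:ℝ) < ((n+2).factorial : ℝ) := by positivity
  have hfac1 : (0:ℝ) < ((n+1).factorial : ℝ) := by positivity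
  have hrp : (0:ℝ) < ((n+1 : ℕ) : ℝ) ^ s.re :=
    Real.rpow_pos_of_pos (by positivity) _
  have hgsn : ‖Complex.GammaSeq s (n+1)‖
      = ((n+1 : ℕ) : ℝ) ^ s.re * ((n+1).factorial : ℝ) / ‖poch s (n+2)‖ := by
    rw [gs_eq, norm_div, norm_mul, Complex.norm_natCast_cpow_of_pos (Nat.succ_pos n)]
    norm_num
  have hgsr : Real.GammaSeq s.re (n+1)
      = ((n+1 : ℕ) : ℝ) ^ s.re * ((n+1).factorial : ℝ) / pochR s.re (n+2) := by
    rw [gsR_eq]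
  show Real.GammaSeq s.re (n+1) / ‖Complex.GammaSeq s (n+1)‖
      = ‖poch s (n+2) / (n+2).factorial‖ / (pochR s.re (n+2) / ((n+2).factorial : ℝ))
  rw [hgsn, hgsr, norm_div]
  have hnf : ‖(((n+2).factorial : ℕ) : ℂ)‖ = (((n+2).factorial : ℕ) : ℝ) := by
    rw [Complex.norm_natCast]
  rw [hnf]
  field_simp

set_option maxHeartbeats 1000000 in
theorem stmt7 (a b c : ℂ) (hc : ∀ m : ℕ, c ≠ -(m : ℂ)) (habc : 0 < (a + b - c).re)
    (ha : ∀ m : ℕ, a ≠ -(m : ℂ)) (hb : ∀ m : ℕ, b ≠ -(m : ℂ)) :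
    Filter.Tendsto (fun x : ℝ => ((1 : ℂ) - (x : ℂ)) ^ (a + b - c) * hyp a b c (x : ℂ))
      (nhdsWithin 1 (Set.Iio 1))
      (nhds (Complex.Gamma c * Complex.Gamma (a + b - c) /
        (Complex.Gamma a * Complex.Gamma b))) := by
  set s : ℂ := a + b - c with hsdef
  set σ : ℝ := s.re with hσdef
  have hσ : 0 < σ := habc
  have hsne : ∀ m : ℕ, s ≠ -(m : ℂ) := fun m h => by
    have h2 : 0 < s.re := habc
    rw [h] at h2
    simp only [Complex.neg_re, Complex.natCast_re] at h2
    have : (0:ℝ) ≤ (m:ℝ) := Nat.cast_nonneg m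
    linarith
  set L : ℂ := Complex.Gamma c * Complex.Gamma s / (Complex.Gamma a * Complex.Gamma b)
    with hL
  set f : ℕ → ℂ := fun n => poch a n * poch b n / (n.factorial * poch c n) with hf
  set cc : ℕ → ℂ := fun n => poch s n / n.factorial with hcc
  set dd : ℕ → ℝ := fun n => pochR σ n / n.factorial with hdd
  have hccne : ∀ n, cc n ≠ 0 := fun n =>
    div_ne_zero (poch_ne_zero hsne n) (Nat.cast_ne_zero.mpr n.factorial_ne_zero)
  have hddpos : ∀ n, 0 < dd n := fun n => by
    have := pochR_pos hσ n
    have h2 : (0:ℝ) < (n.factorial : ℝ) := by positivity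
    exact div_pos this h2
  have hratio : Tendsto (fun n => f n / cc n) atTop (𝓝 L) := ratio_tendsto ha hb hc hsne
  have hnrm : Tendsto (fun n => ‖cc n‖ / dd n) atTop
      (𝓝 (Real.Gamma σ / ‖Complex.Gamma s‖)) := norm_ratio_tendsto (s := s) habc
  have herr : Tendsto (fun n => ‖f n - L * cc n‖ / dd n) atTop (𝓝 0) := by
    have h1 : (fun n => ‖f n - L * cc n‖ / dd n)
        = fun n => ‖f n / cc n - L‖ * (‖cc n‖ / dd n) := by
      funext n
      have h2 : f n - L * cc n = (f n / cc n - L) * cc n := by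
        rw [sub_mul, div_mul_cancel₀ _ (hccne n)]
      rw [h2, norm_mul, mul_div_assoc]
    rw [h1]
    have h2 := (hratio.sub_const L).norm
    rw [sub_self, norm_zero] at h2
    have h3 := h2.mul hnrm
    rwa [zero_mul] at h3
  -- summability bound
  obtain ⟨M, hM⟩ := herr.bddAbove_range
  have hbd : ∀ n, ‖f n - L * cc n‖ ≤ M * dd n := fun n => by
    have h1 : ‖f n - L * cc n‖ / dd n ≤ M := hM (Set.mem_range_self n)
    calc ‖f n - L * cc n‖ = ‖f n - L * cc n‖ / dd n * dd n :=
          (div_mul_cancel₀ _ (hddpos n).ne').symm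
    _ ≤ M * dd n := mul_le_mul_of_nonneg_right h1 (hddpos n).le
  -- the error term tendsto 0
  have habel : Tendsto (fun x : ℝ => (1 - x) ^ σ * ∑' n, ‖f n - L * cc n‖ * x ^ n)
      (nhdsWithin 1 (Set.Iio 1)) (𝓝 0) := by
    refine abel_pos hσ (fun n => norm_nonneg _) ?_
    simpa [hdd] using herr
  have herrx : Tendsto (fun x : ℝ => ((1:ℂ) - (x:ℂ)) ^ s * ∑' n, (f n - L * cc n) * (x:ℂ) ^ n)
      (nhdsWithin 1 (Set.Iio 1)) (𝓝 0) := by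
    refine squeeze_zero_norm' ?_ habel
    filter_upwards [Ioo_mem_nhdsLT_of_mem (by norm_num : (1:ℝ) ∈ Set.Ioc 0 1)] with x hx
    obtain ⟨hx0, hx1⟩ := hx
    have h1x : (0:ℝ) < 1 - x := by linarith
    have hcast : ((1:ℂ) - (x:ℂ)) = (((1 - x : ℝ)) : ℂ) := by push_cast; ring
    have hnorm1 : ‖((1:ℂ) - (x:ℂ)) ^ s‖ = (1 - x) ^ σ := by
      rw [hcast, Complex.norm_cpow_eq_rpow_re_of_pos h1x]
    have hsumnorm : Summable (fun n => ‖(f n - L * cc n) * (x:ℂ) ^ n‖) := by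
      refine Summable.of_nonneg_of_le (fun n => norm_nonneg _) (fun n => ?_)
        (((summable_pochR hσ hx0 hx1)).mul_left M)
      rw [norm_mul, norm_pow, Complex.norm_real, Real.norm_of_nonneg hx0.le]
      calc ‖f n - L * cc n‖ * x ^ n ≤ M * dd n * x ^ n :=
            mul_le_mul_of_nonneg_right (hbd n) (by positivity)
      _ = M * (pochR σ n / n.factorial * x ^ n) := by rw [hdd]; ring
    rw [norm_mul, hnorm1]
    refine mul_le_mul_of_nonneg_left ?_ (by positivity)
    calc ‖∑' n, (f n - L * cc n) * (x:ℂ) ^ n‖ ≤ ∑' n, ‖(f n - L * cc n) * (x:ℂ) ^ n‖ :=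
          norm_tsum_le_tsum_norm hsumnorm
    _ = ∑' n, ‖f n - L * cc n‖ * x ^ n := by
        refine tsum_congr fun n => ?_
        rw [norm_mul, norm_pow, Complex.norm_real, Real.norm_of_nonneg hx0.le]
  -- main decomposition
  have hmain : ∀ᶠ x : ℝ in nhdsWithin 1 (Set.Iio 1),
      L + ((1:ℂ) - (x:ℂ)) ^ s * ∑' n, (f n - L * cc n) * (x:ℂ) ^ n
        = ((1 : ℂ) - (x : ℂ)) ^ s * hyp a b c (x : ℂ) := by
    filter_upwards [Ioo_mem_nhdsLT_of_mem (by norm_num : (1:ℝ) ∈ Set.Ioc 0 1)] with x hx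
    obtain ⟨hx0, hx1⟩ := hx
    have h1x : (0:ℝ) < 1 - x := by linarith
    have hbin := hasSum_binomial (z := s) habc hx0 hx1
    have hccsum : Summable (fun n => cc n * (x:ℂ) ^ n) := by
      refine hbin.summable.congr fun n => ?_
      rw [hcc]
    have hesum : Summable (fun n => (f n - L * cc n) * (x:ℂ) ^ n) := by
      refine Summable.of_norm ?_
      refine Summable.of_nonneg_of_le (fun n => norm_nonneg _) (fun n => ?_)
        (((summable_pochR hσ hx0 hx1)).mul_left M)
      rw [norm_mul, norm_pow, Complex.norm_real, Real.norm_of_nonneg hx0.le]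
      calc ‖f n - L * cc n‖ * x ^ n ≤ M * dd n * x ^ n :=
            mul_le_mul_of_nonneg_right (hbd n) (by positivity)
      _ = M * (pochR σ n / n.factorial * x ^ n) := by rw [hdd]; ring
    have hhyp : hyp a b c (x : ℂ) = ∑' n, f n * (x:ℂ) ^ n := rfl
    have hsplit : (fun n => f n * (x:ℂ) ^ n)
        = fun n => L * (cc n * (x:ℂ) ^ n) + (f n - L * cc n) * (x:ℂ) ^ n := by
      funext n
      ring
    have htsum : hyp a b c (x : ℂ)
        = L * ∑' n, cc n * (x:ℂ) ^ n + ∑' n, (f n - L * cc n) * (x:ℂ) ^ n := by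
      rw [hhyp, hsplit, Summable.tsum_add (hccsum.mul_left L) hesum, tsum_mul_left]
    have hccval : (∑' n, cc n * (x:ℂ) ^ n) = ((1:ℂ) - (x:ℂ)) ^ (-s) := by
      rw [← hbin.tsum_eq]
    have hbase : ((1:ℂ) - (x:ℂ)) ≠ 0 := by
      have : ((1:ℂ) - (x:ℂ)) = (((1 - x : ℝ)) : ℂ) := by push_cast; ring
      rw [this]
      exact_mod_cast h1x.ne'
    have hone : ((1:ℂ) - (x:ℂ)) ^ s * ((1:ℂ) - (x:ℂ)) ^ (-s) = 1 := by
      rw [Complex.cpow_neg, mul_inv_cancel₀]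
      simp only [ne_eq, Complex.cpow_eq_zero_iff, not_and_or, not_not]
      exact Or.inl hbase
    rw [htsum, hccval]
    calc L + ((1:ℂ) - (x:ℂ)) ^ s * ∑' n, (f n - L * cc n) * (x:ℂ) ^ n
        = L * (((1:ℂ) - (x:ℂ)) ^ s * ((1:ℂ) - (x:ℂ)) ^ (-s))
          + ((1:ℂ) - (x:ℂ)) ^ s * ∑' n, (f n - L * cc n) * (x:ℂ) ^ n := by
          rw [hone, mul_one]
    _ = ((1:ℂ) - (x:ℂ)) ^ s *
          (L * ((1:ℂ) - (x:ℂ)) ^ (-s) + ∑' n, (f n - L * cc n) * (x:ℂ) ^ n) := by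
          ring
  have hfinal := (tendsto_const_nhds (x := L)
      (f := nhdsWithin (1:ℝ) (Set.Iio 1))).add herrx
  rw [add_zero] at hfinal
  exact Tendsto.congr' hmain hfinal
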